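/- Fix β > 0, Δ ∈ ℝ, and (x_1,x_2) ∈ ℝ² with |x_1| < x_2 and 0 < x_2 < 1. Define W(y_1,y_2) = x_1y_1 + x_2y_2 − log(e^{βΔ+y_1+y_2} + e^{βΔ+y_2−y_1} + 1) + log(1+2e^{βΔ}). Then W attains its supremum over ℝ² at the unique point (y_1*, y_2*) given by y_1* = artanh(x_1/x_2) and y_2* = −βΔ + log( x_2 / (2(1−x_2) cosh y_1*) ), and the supremum equals R(x_1,x_2) = x_1 y_1* + x_2 y_2* + log(1−x_2) + log(1+2e^{βΔ}). -/

import Mathlib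

noncomputable section

/-- The inverse hyperbolic tangent. -/
def artanh (x : ℝ) : ℝ := Real.log ((1 + x) / (1 - x)) / 2

/-- For the pure Blume-Capel model, the function
`W(y₁,y₂) = x₁y₁ + x₂y₂ − log(e^{βΔ+y₁+y₂} + e^{βΔ+y₂−y₁} + 1) + log(1+2e^{βΔ})`
attains its supremum over `ℝ²` at the unique point `(y₁*, y₂*)` with
`y₁* = artanh(x₁/x₂)`, `y₂* = −βΔ + log(x₂/(2(1−x₂)cosh y₁*))`, and the supremum equals
`R(x₁,x₂) = x₁y₁* + x₂y₂* + log(1−x₂) + log(1+2e^{βΔ})`. -/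
theorem sup_W_pure (β Δ x₁ x₂ : ℝ) (hβ : 0 < β) (hx : |x₁| < x₂) (hx0 : 0 < x₂)
    (hx1 : x₂ < 1)
    (W : ℝ × ℝ → ℝ)
    (hW : ∀ y : ℝ × ℝ, W y =
      x₁ * y.1 + x₂ * y.2 -
        Real.log (Real.exp (β * Δ + y.1 + y.2) + Real.exp (β * Δ + y.2 - y.1) + 1) +
        Real.log (1 + 2 * Real.exp (β * Δ)))
    (y₁s y₂s : ℝ)
    (hy₁ : y₁s = artanh (x₁ / x₂))
    (hy₂ : y₂s = -(β * Δ) + Real.log (x₂ / (2 * (1 - x₂) * Real.cosh y₁s))) :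
    (∀ y : ℝ × ℝ, y ≠ (y₁s, y₂s) → W y < W (y₁s, y₂s)) ∧
    W (y₁s, y₂s) =
      x₁ * y₁s + x₂ * y₂s + Real.log (1 - x₂) + Real.log (1 + 2 * Real.exp (β * Δ)) := by
  have habs := abs_lt.mp hx
  set p := (x₂ + x₁) / 2 with hpdef
  set q := (x₂ - x₁) / 2 with hqdef
  set r := 1 - x₂ with hrdef
  have hp : 0 < p := by rw [hpdef]; linarith [habs.1]
  have hq : 0 < q := by rw [hqdef]; linarith [habs.2]
  have hr : 0 < r := by rw [hrdef]; linarith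
  have hp' : p ≠ 0 := ne_of_gt hp
  have hq' : q ≠ 0 := ne_of_gt hq
  have hr' : r ≠ 0 := ne_of_gt hr
  have hpq : p + q = x₂ := by rw [hpdef, hqdef]; ring
  have hpqr : p + q + r = 1 := by rw [hrdef]; linarith
  have hcosh : (0:ℝ) < Real.cosh y₁s := Real.cosh_pos y₁s
  -- exp(2 y₁s) = p / q
  have hd1 : (0:ℝ) < 1 - x₁ / x₂ := by
    rw [sub_pos]; exact (div_lt_one hx0).mpr habs.2
  have hd2 : (0:ℝ) < 1 + x₁ / x₂ := by
    have : -1 < x₁ / x₂ := by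
      rw [neg_lt, ← neg_div]
      exact (div_lt_one hx0).mpr (by linarith [habs.1])
    linarith
  have hz : (1 + x₁ / x₂) / (1 - x₁ / x₂) = p / q := by
    rw [div_eq_div_iff (ne_of_gt hd1) hq', hpdef, hqdef]
    have hxx : x₁ / x₂ * x₂ = x₁ := div_mul_cancel₀ x₁ (ne_of_gt hx0)
    linear_combination hxx
  have hE2 : Real.exp (2 * y₁s) = p / q := by
    rw [hy₁]
    simp only [artanh]
    rw [show 2 * (Real.log ((1 + x₁ / x₂) / (1 - x₁ / x₂)) / 2)
        = Real.log ((1 + x₁ / x₂) / (1 - x₁ / x₂)) by ring, hz,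
      Real.exp_log (by positivity)]
  have hEsq : Real.exp y₁s * Real.exp y₁s = p / q := by
    rw [← Real.exp_add, show y₁s + y₁s = 2 * y₁s by ring, hE2]
  -- exp(βΔ + y₂s)
  have hE : Real.exp (β * Δ + y₂s) = x₂ / (2 * r * Real.cosh y₁s) := by
    rw [hy₂, show β * Δ + (-(β * Δ) + Real.log (x₂ / (2 * r * Real.cosh y₁s)))
        = Real.log (x₂ / (2 * r * Real.cosh y₁s)) by ring,
      Real.exp_log (by positivity)]
  have hcosh2 : 2 * Real.cosh y₁s = Real.exp y₁s + (Real.exp y₁s)⁻¹ := by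
    rw [Real.cosh_eq, Real.exp_neg]; ring
  have he := Real.exp_pos y₁s
  have hinv : Real.exp y₁s * (Real.exp y₁s)⁻¹ = 1 := mul_inv_cancel₀ (ne_of_gt he)
  have hA : Real.exp (β * Δ + y₁s + y₂s) = p / r := by
    rw [show β * Δ + y₁s + y₂s = (β * Δ + y₂s) + y₁s by ring, Real.exp_add, hE]
    rw [div_mul_eq_mul_div, div_eq_div_iff (by positivity) hr',
      show 2 * r * Real.cosh y₁s = r * (2 * Real.cosh y₁s) by ring, hcosh2]
    have hEsq' : q * (Real.exp y₁s * Real.exp y₁s) = p := by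
      rw [hEsq]; field_simp
    linear_combination (r * (Real.exp y₁s)⁻¹) * hEsq'
      + (-(q * r * Real.exp y₁s)) * hinv + (-(Real.exp y₁s * r)) * hpq
  have hB : Real.exp (β * Δ + y₂s - y₁s) = q / r := by
    rw [show β * Δ + y₂s - y₁s = (β * Δ + y₁s + y₂s) + (-(2 * y₁s)) by ring,
      Real.exp_add, hA, Real.exp_neg, hE2, inv_div]
    field_simp
  have hSs : Real.exp (β * Δ + y₁s + y₂s) + Real.exp (β * Δ + y₂s - y₁s) + 1 = r⁻¹ := by
    rw [hA, hB]
    field_simp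
    linarith
  -- the value at the maximizer
  have hval : W (y₁s, y₂s) =
      x₁ * y₁s + x₂ * y₂s + Real.log r + Real.log (1 + 2 * Real.exp (β * Δ)) := by
    rw [hW (y₁s, y₂s)]
    dsimp only
    rw [hSs, Real.log_inv]
    ring
  refine ⟨?_, by rw [hval]⟩
  -- characterize the maximizer via logs
  have hlogA : β * Δ + y₁s + y₂s = Real.log p - Real.log r := by
    rw [← Real.log_exp (β * Δ + y₁s + y₂s), hA, Real.log_div hp' hr']
  have hlogB : β * Δ + y₂s - y₁s = Real.log q - Real.log r := by
    rw [← Real.log_exp (β * Δ + y₂s - y₁s), hB, Real.log_div hq' hr']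
  intro y hy
  set A := Real.exp (β * Δ + y.1 + y.2) with hAdef
  set B := Real.exp (β * Δ + y.2 - y.1) with hBdef
  have hApos : 0 < A := Real.exp_pos _
  have hBpos : 0 < B := Real.exp_pos _
  set S := A + B + 1 with hSdef
  have hSpos : 0 < S := by positivity
  have hS' : S ≠ 0 := ne_of_gt hSpos
  set tA := A / (p * S) with htAdef
  set tB := B / (q * S) with htBdef
  set tC := 1 / (r * S) with htCdef
  have htApos : 0 < tA := by rw [htAdef]; positivity
  have htBpos : 0 < tB := by rw [htBdef]; positivity
  have htCpos : 0 < tC := by rw [htCdef]; positivity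
  -- the convex combination sums to one
  have h1 : p * tA = A / S := by rw [htAdef]; field_simp
  have h2 : q * tB = B / S := by rw [htBdef]; field_simp
  have h3 : r * tC = 1 / S := by rw [htCdef]; field_simp
  have hcomb : p * tA + q * tB + r * tC = 1 := by
    rw [h1, h2, h3, ← add_div, ← add_div, ← hSdef, div_self hS']
  -- not all weights equal to one
  have hne : ¬ (tA = 1 ∧ tB = 1 ∧ tC = 1) := by
    rintro ⟨hA1, hB1, hC1⟩
    rw [htAdef, div_eq_one_iff_eq (by positivity)] at hA1
    rw [htBdef, div_eq_one_iff_eq (by positivity)] at hB1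
    rw [htCdef, div_eq_one_iff_eq (by positivity)] at hC1
    have hSr : S = r⁻¹ := eq_inv_of_mul_eq_one_left (by rw [mul_comm]; exact hC1.symm)
    have hAe : A = p / r := by rw [hA1, hSr, div_eq_mul_inv]
    have hBe : B = q / r := by rw [hB1, hSr, div_eq_mul_inv]
    have e1 : β * Δ + y.1 + y.2 = β * Δ + y₁s + y₂s :=
      Real.exp_injective (hAdef.symm.trans (hAe.trans hA.symm))
    have e2 : β * Δ + y.2 - y.1 = β * Δ + y₂s - y₁s :=
      Real.exp_injective (hBdef.symm.trans (hBe.trans hB.symm))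
    exact hy (Prod.ext (by linarith) (by linarith))
  -- Gibbs' inequality, strict in at least one coordinate
  have hgA : p * Real.log tA ≤ p * (tA - 1) :=
    mul_le_mul_of_nonneg_left (Real.log_le_sub_one_of_pos htApos) (le_of_lt hp)
  have hgB : q * Real.log tB ≤ q * (tB - 1) :=
    mul_le_mul_of_nonneg_left (Real.log_le_sub_one_of_pos htBpos) (le_of_lt hq)
  have hgC : r * Real.log tC ≤ r * (tC - 1) :=
    mul_le_mul_of_nonneg_left (Real.log_le_sub_one_of_pos htCpos) (le_of_lt hr)
  have hstrict : p * Real.log tA + q * Real.log tB + r * Real.log tC < 0 := by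
    have h0 : p * (tA - 1) + q * (tB - 1) + r * (tC - 1) = 0 := by
      have h4 : p * tA + q * tB + r * tC - (p + q + r) = 0 := by rw [hcomb, hpqr]; ring
      linarith [h4]
    rcases not_and_or.mp hne with h | h
    · have : p * Real.log tA < p * (tA - 1) :=
        mul_lt_mul_of_pos_left (Real.log_lt_sub_one_of_pos htApos h) hp
      linarith
    · rcases not_and_or.mp h with h | h
      · have : q * Real.log tB < q * (tB - 1) :=
          mul_lt_mul_of_pos_left (Real.log_lt_sub_one_of_pos htBpos h) hq
        linarith
      · have : r * Real.log tC < r * (tC - 1) :=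
          mul_lt_mul_of_pos_left (Real.log_lt_sub_one_of_pos htCpos h) hr
        linarith
  -- identify the Gibbs sum with the difference of W values
  have hlogtA : Real.log tA = (β * Δ + y.1 + y.2) - Real.log p - Real.log S := by
    rw [htAdef, Real.log_div (ne_of_gt hApos) (by positivity),
      Real.log_mul hp' hS', hAdef, Real.log_exp]
    ring
  have hlogtB : Real.log tB = (β * Δ + y.2 - y.1) - Real.log q - Real.log S := by
    rw [htBdef, Real.log_div (ne_of_gt hBpos) (by positivity),
      Real.log_mul hq' hS', hBdef, Real.log_exp]
    ring
  have hlogtC : Real.log tC = - Real.log r - Real.log S := by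
    rw [htCdef, Real.log_div one_ne_zero (by positivity),
      Real.log_mul hr' hS', Real.log_one]
    ring
  have hx1s : x₁ * y₁s + x₂ * y₂s
      = p * (Real.log p - Real.log r) + q * (Real.log q - Real.log r) - x₂ * (β * Δ) := by
    have h5 : p * (β * Δ + y₁s + y₂s) + q * (β * Δ + y₂s - y₁s)
        = x₂ * (β * Δ) + x₁ * y₁s + x₂ * y₂s := by
      rw [hpdef, hqdef]; ring
    rw [← hlogA, ← hlogB]; linarith
  have hx1y : x₁ * y.1 + x₂ * y.2
      = p * (β * Δ + y.1 + y.2) + q * (β * Δ + y.2 - y.1) - x₂ * (β * Δ) := by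
    rw [hpdef, hqdef]; ring
  have hdiff : W y - W (y₁s, y₂s)
      = p * Real.log tA + q * Real.log tB + r * Real.log tC := by
    rw [hW y, hval, hlogtA, hlogtB, hlogtC, ← hAdef, ← hBdef, ← hSdef, hx1y, hx1s]
    linear_combination (Real.log S + Real.log r) * hpqr
  linarith [hstrict, hdiff]

end
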